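/- arXiv:2104.12355 — 3 statements merged into one kernel-verified Lean document; each statement's English description precedes it below -/
import Mathlib

section
/- For every λ ∈ ℝ and every δ ∈ (0, π/2), there exist at most 4 points y₁,…,y_n ∈ [0, 2π) such that for all y ∈ [0,2π) with |y - y_j| ≥ δ for every j, one has |sin y - λ| ≥ c₁ δ², where c₁ > 0 is a universal constant. -/
open Real

/-- On `[0, π]`, `sin u` is at least `(2/π) d` if `d` is below the distance of `u`
to both endpoints (and `d ≤ π/2`). -/
lemma aux_sin_lb_Icc {u d : ℝ} (h0 : 0 ≤ u) (h1 : u ≤ π) (hd0 : 0 ≤ d)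
    (hdu : d ≤ u) (hdu' : d ≤ π - u) : 2 / π * d ≤ Real.sin u := by
  rcases le_or_gt u (π / 2) with h | h
  · calc 2 / π * d ≤ 2 / π * u := by
          have : (0:ℝ) < π := Real.pi_pos
          gcongr
    _ ≤ Real.sin u := Real.mul_le_sin h0 h
  · have h2 : Real.sin u = Real.sin (π - u) := (Real.sin_pi_sub u).symm
    rw [h2]
    calc 2 / π * d ≤ 2 / π * (π - u) := by
          have : (0:ℝ) < π := Real.pi_pos
          gcongr
    _ ≤ Real.sin (π - u) := Real.mul_le_sin (by linarith) (by linarith)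

/-- On `[-3π/2, 3π/2]`, `|sin u|` is at least `(2/π) d` if `d` is below the distance
of `u` to `0, π, -π` and `d ≤ π/2`. -/
lemma aux_sin_lb {u d : ℝ} (hl : -(3 * π / 2) ≤ u) (hr : u ≤ 3 * π / 2)
    (hd0 : 0 ≤ d) (hdp : d ≤ π / 2)
    (h1 : d ≤ |u|) (h2 : d ≤ |u - π|) (h3 : d ≤ |u + π|) :
    2 / π * d ≤ |Real.sin u| := by
  have hpi : (0:ℝ) < π := Real.pi_pos
  have key : ∀ v : ℝ, 0 ≤ v → v ≤ 3 * π / 2 → d ≤ |v| → d ≤ |v - π| →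
      2 / π * d ≤ |Real.sin v| := by
    intro v hv0 hv1 hv2 hv3
    rcases le_or_gt v π with h | h
    · have := aux_sin_lb_Icc hv0 h hd0 (by rwa [abs_of_nonneg hv0] at hv2)
        (by rw [abs_sub_comm, abs_of_nonneg (by linarith)] at hv3; linarith)
      calc 2 / π * d ≤ Real.sin v := this
        _ ≤ |Real.sin v| := le_abs_self _
    · have hs : Real.sin v = -Real.sin (v - π) := by
        have := Real.sin_pi_sub v
        rw [show π - v = -(v - π) by ring, Real.sin_neg] at this
        linarith
      have hlb := aux_sin_lb_Icc (u := v - π) (by linarith) (by linarith) hd0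
        (by rwa [abs_of_nonneg (by linarith)] at hv3) (by linarith)
      rw [hs, abs_neg]
      calc 2 / π * d ≤ Real.sin (v - π) := hlb
        _ ≤ |Real.sin (v - π)| := le_abs_self _
  rcases le_or_gt 0 u with h | h
  · exact key u h hr h1 h2
  · have := key (-u) (by linarith) (by linarith) (by rwa [abs_neg])
      (by rw [show -u - π = -(u + π) by ring, abs_neg]; exact h3)
    rwa [Real.sin_neg, abs_neg] at this

set_option maxHeartbeats 1000000 in
theorem stmt_1 :
    ∃ c₁ : ℝ, 0 < c₁ ∧
      ∀ (lam : ℝ) (δ : ℝ), 0 < δ → δ < π / 2 →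
        ∃ (n : ℕ) (y : Fin n → ℝ), n ≤ 4 ∧ (∀ j, y j ∈ Set.Ico (0 : ℝ) (2 * π)) ∧
          ∀ z ∈ Set.Ico (0 : ℝ) (2 * π), (∀ j, δ ≤ |z - y j|) →
            c₁ * δ ^ 2 ≤ |Real.sin z - lam| := by
  have hpi : (0:ℝ) < π := Real.pi_pos
  have hpi2 : π < 3.15 := Real.pi_lt_d2
  have hpi1 : 3.14 < π := Real.pi_gt_d2
  refine ⟨1/5, by norm_num, ?_⟩
  intro lam δ hδ0 hδπ
  -- clamp lam to [-1,1]
  set μ : ℝ := max (-1) (min 1 lam) with hμ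
  have hμ1 : -1 ≤ μ := le_max_left _ _
  have hμ2 : μ ≤ 1 := by
    apply max_le (by norm_num) (min_le_left _ _)
  set a : ℝ := Real.arcsin μ with ha
  have ha1 : -(π/2) ≤ a := Real.neg_pi_div_two_le_arcsin μ
  have ha2 : a ≤ π/2 := Real.arcsin_le_pi_div_two μ
  have hsa : Real.sin a = μ := Real.sin_arcsin hμ1 hμ2
  -- the four points
  set a' : ℝ := if a < 0 then a + 2*π else a with ha'
  refine ⟨4, ![a', π - a, 0, 2*π - δ], le_refl _, ?_, ?_⟩
  · have ha'mem : 0 ≤ a' ∧ a' < 2*π := by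
      rw [ha']; split <;> constructor <;> linarith
    have hb1 : (0:ℝ) ≤ π - a := by linarith
    have hb2 : π - a < 2*π := by linarith
    have hb3 : (0:ℝ) < 2*π := by linarith
    have hb4 : (0:ℝ) ≤ 2*π - δ := by linarith
    have hb5 : 2*π - δ < 2*π := by linarith
    intro j
    fin_cases j
    · exact ⟨ha'mem.1, ha'mem.2⟩
    · exact ⟨hb1, hb2⟩
    · exact ⟨le_refl _, hb3⟩
    · exact ⟨hb4, hb5⟩
  · intro z hz hfar
    obtain ⟨hz0, hz1⟩ := hz
    have h0 := hfar 0
    have h1 := hfar 1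
    have h2 := hfar 2
    have h3 := hfar 3
    simp only [Matrix.cons_val_zero, Matrix.cons_val_one, Matrix.head_cons,
      Matrix.cons_val_two, Matrix.tail_cons, Matrix.cons_val_three] at h0 h1 h2 h3
    rw [sub_zero] at h2
    have hzδ : δ ≤ z := by rwa [abs_of_nonneg hz0] at h2
    have hz2 : z ≤ 2*π - 2*δ := by
      rcases abs_cases (z - (2*π - δ)) with ⟨he, hc⟩ | ⟨he, hc⟩ <;> rw [he] at h3 <;> linarith
    -- distance bounds for z - a and z - a - 2π
    have hza : δ ≤ |z - a| := by
      rw [ha'] at h0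
      split_ifs at h0 with h
      · rw [abs_of_nonneg (by linarith)]
        linarith
      · exact h0
    have hza2 : δ ≤ |z - a - 2*π| := by
      rw [ha'] at h0
      split_ifs at h0 with h
      · rw [show z - a - 2*π = z - (a + 2*π) by ring]
        exact h0
      · rw [abs_of_nonpos (by linarith)]
        push_neg at h
        linarith
    -- factorization
    have hfact : Real.sin z - μ = 2 * Real.sin ((z - a)/2) * Real.cos ((z + a)/2) := by
      rw [← hsa, Real.sin_sub_sin]
    -- bound sin factor
    have hu : 2 / π * (δ/2) ≤ |Real.sin ((z - a)/2)| := by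
      apply aux_sin_lb (by linarith) (by linarith) (by linarith) (by linarith)
      · rw [abs_div, abs_of_pos (by norm_num : (0:ℝ) < 2)]
        linarith [hza]
      · rw [show (z - a)/2 - π = (z - a - 2*π)/2 by ring, abs_div,
          abs_of_pos (by norm_num : (0:ℝ) < 2)]
        linarith [hza2]
      · rw [abs_of_nonneg (by linarith)]
        linarith
    -- bound cos factor
    have hv : 2 / π * (δ/2) ≤ |Real.cos ((z + a)/2)| := by
      have hcs : Real.cos ((z + a)/2) = -Real.sin ((z + a)/2 - π/2) := by
        rw [show (z + a)/2 - π/2 = -(π/2 - (z+a)/2) by ring, Real.sin_neg,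
          Real.sin_pi_div_two_sub, neg_neg]
      rw [hcs, abs_neg]
      apply aux_sin_lb (by linarith) (by linarith) (by linarith) (by linarith)
      · rw [show (z + a)/2 - π/2 = (z - (π - a))/2 by ring, abs_div,
          abs_of_pos (by norm_num : (0:ℝ) < 2)]
        linarith [h1]
      · rw [abs_of_nonpos (by linarith)]
        linarith
      · rw [abs_of_nonneg (by linarith)]
        linarith
    -- combine
    have hprod : 2 * (2 / π * (δ/2)) * (2 / π * (δ/2)) ≤ |Real.sin z - μ| := by
      rw [hfact, abs_mul, abs_mul, abs_of_pos (by norm_num : (0:ℝ) < 2)]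
      have h1' : (0:ℝ) ≤ 2 / π * (δ/2) := by positivity
      gcongr
    have hπsq : π^2 ≤ 10 := by nlinarith
    have hbound : 1/5 * δ^2 ≤ |Real.sin z - μ| := by
      refine le_trans ?_ hprod
      rw [show 2 * (2 / π * (δ/2)) * (2 / π * (δ/2)) = 2 * δ^2 / π^2 by field_simp]
      rw [le_div_iff₀ (by positivity)]
      have : δ^2 * π^2 ≤ δ^2 * 10 := mul_le_mul_of_nonneg_left hπsq (sq_nonneg δ)
      linarith
    -- replace μ by lam
    have hfin : |Real.sin z - μ| ≤ |Real.sin z - lam| := by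
      have hs1 : Real.sin z ≤ 1 := Real.sin_le_one z
      have hs2 : -1 ≤ Real.sin z := Real.neg_one_le_sin z
      rcases le_or_gt lam (-1) with h | h
      · have : μ = -1 := by
          rw [hμ, max_eq_left]
          exact le_trans (min_le_right _ _) h
        rw [this, abs_of_nonneg (by linarith), abs_of_nonneg (by linarith)]
        linarith
      · rcases le_or_gt 1 lam with h' | h'
        · have : μ = 1 := by
            rw [hμ, min_eq_left h', max_eq_right (by norm_num)]
          rw [this, abs_of_nonpos (by linarith), abs_of_nonpos (by linarith)]
          linarith
        · have : μ = lam := by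
            rw [hμ, min_eq_right h'.le, max_eq_right h.le]
          rw [this]
    linarith
end

section
/- For every λ ∈ ℝ, every α ∈ ℝ, and every sufficiently small δ > 0, there exist at most N points y₁,…,y_n ∈ [0, 2π) (with N a universal constant) such that |cos(y) sin(y + α) - λ| ≥ c₁ δ² whenever |y - y_j| ≥ δ for all j, where c₁ > 0 is a universal constant. -/
open Real

/-- Jordan-type bound: if `x` is at distance at least `δ ≤ π/2` from every
integer multiple of `π`, then `|sin x| ≥ (2/π) δ`. -/
lemma jordan_far {x δ : ℝ} (hδ : 0 < δ) (hδ' : δ ≤ π / 2)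
    (h : ∀ k : ℤ, δ ≤ |x - k * π|) : 2 / π * δ ≤ |Real.sin x| := by
  have hp : (0 : ℝ) < π := Real.pi_pos
  set k : ℤ := round (x / π) with hk
  have hr : |x / π - k| ≤ 1 / 2 := abs_sub_round (x / π)
  set t : ℝ := x - k * π with ht
  have htb : |t| ≤ π / 2 := by
    have h1 : |x / π - k| * π ≤ 1 / 2 * π := mul_le_mul_of_nonneg_right hr hp.le
    have he : |t| = |x / π - k| * π := by
      rw [ht, show x - (k : ℝ) * π = (x / π - k) * π by rw [sub_mul, div_mul_cancel₀ _ hp.ne'], abs_mul,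
        abs_of_pos hp]
    linarith
  have htd : δ ≤ |t| := h k
  have hsin : |Real.sin x| = |Real.sin t| := by
    have := Real.sin_sub_int_mul_pi x k
    rw [← ht] at this
    have hone : |(-1 : ℝ) ^ k| = 1 := by
      rw [show |(-1 : ℝ) ^ k| = |(-1 : ℝ)| ^ k from map_zpow₀ absHom (-1) k,
        abs_neg, abs_one, one_zpow]
    rw [this, abs_mul, hone, one_mul]
  rw [hsin]
  have habs : |Real.sin t| = Real.sin |t| := by
    rcases le_or_gt 0 t with h0 | h0
    · rw [abs_of_nonneg h0, abs_of_nonneg]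
      exact Real.sin_nonneg_of_nonneg_of_le_pi h0 (by linarith [abs_of_nonneg h0 ▸ htb])
    · have habs' : |t| = -t := abs_of_neg h0
      have hs : Real.sin t ≤ 0 := by
        rw [← neg_nonneg, ← Real.sin_neg]
        exact Real.sin_nonneg_of_nonneg_of_le_pi (by linarith)
          (by rw [← habs'] at *; linarith)
      rw [habs', Real.sin_neg]
      exact abs_of_nonpos hs
  rw [habs]
  calc 2 / π * δ ≤ 2 / π * |t| := by
        apply mul_le_mul_of_nonneg_left htd
        positivity
    _ ≤ Real.sin |t| := Real.mul_le_sin (abs_nonneg t) htb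

/-- clamping to `[-1,1]` only decreases the distance to a point of `[-1,1]`. -/
lemma clamp_closer {s μ : ℝ} (h1 : -1 ≤ s) (h2 : s ≤ 1) :
    |s - max (-1) (min 1 μ)| ≤ |s - μ| := by
  rcases le_total μ (-1) with hμ | hμ
  · have he : max (-1) (min 1 μ) = -1 := by
      rw [min_eq_right (by linarith : μ ≤ 1)]
      exact max_eq_left hμ
    rw [he, abs_of_nonneg (by linarith), abs_of_nonneg (by linarith)]
    linarith
  rcases le_total 1 μ with hμ' | hμ'
  · have he : max (-1) (min 1 μ) = 1 := by
      rw [min_eq_left hμ']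
      exact max_eq_right (by norm_num)
    rw [he, abs_of_nonpos (by linarith), abs_of_nonpos (by linarith)]
    linarith
  · have he : max (-1) (min 1 μ) = μ := by
      rw [min_eq_right hμ']
      exact max_eq_right hμ
    rw [he]

lemma floor_rep (c : ℝ) : 0 ≤ c - π * ⌊c / π⌋ ∧ c - π * ⌊c / π⌋ < π := by
  have hp : (0 : ℝ) < π := Real.pi_pos
  have h1 : (⌊c / π⌋ : ℝ) ≤ c / π := Int.floor_le _
  have h2 : c / π < ⌊c / π⌋ + 1 := Int.lt_floor_add_one _
  have h1' : π * ⌊c / π⌋ ≤ c := by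
    have := mul_le_mul_of_nonneg_left h1 hp.le
    rwa [mul_div_cancel₀ _ hp.ne'] at this
  have h2' : c < π * ⌊c / π⌋ + π := by
    have := mul_lt_mul_of_pos_left h2 hp
    rw [mul_div_cancel₀ _ hp.ne'] at this
    linarith
  constructor <;> linarith

set_option maxHeartbeats 800000

theorem stmt_2 :
    ∃ (N : ℕ) (c₁ δ₀ : ℝ), 0 < c₁ ∧ 0 < δ₀ ∧
      ∀ (lam α δ : ℝ), 0 < δ → δ < δ₀ →
        ∃ (n : ℕ) (y : Fin n → ℝ), n ≤ N ∧ (∀ j, y j ∈ Set.Ico (0 : ℝ) (2 * π)) ∧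
          ∀ z ∈ Set.Ico (0 : ℝ) (2 * π), (∀ j, δ ≤ |z - y j|) →
            c₁ * δ ^ 2 ≤ |Real.cos z * Real.sin (z + α) - lam| := by
  have hp : (0 : ℝ) < π := Real.pi_pos
  have hp3 : (3 : ℝ) < π := Real.pi_gt_three
  have hp4 : π ≤ 4 := Real.pi_le_four
  refine ⟨6, 1/4, 1, by norm_num, by norm_num, ?_⟩
  intro lam α δ hδ hδ1
  set μ : ℝ := 2 * lam - Real.sin α with hμdef
  set μ' : ℝ := max (-1) (min 1 μ) with hμ'def
  have hμ'1 : -1 ≤ μ' := le_max_left _ _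
  have hμ'2 : μ' ≤ 1 := max_le (by norm_num) (min_le_left _ _)
  set β : ℝ := Real.arcsin μ' with hβdef
  have hβ : Real.sin β = μ' := Real.sin_arcsin hμ'1 hμ'2
  set c1 : ℝ := (β - α) / 2 with hc1def
  set c2 : ℝ := (π - β - α) / 2 with hc2def
  set r1 : ℝ := c1 - π * ⌊c1 / π⌋ with hr1def
  set r2 : ℝ := c2 - π * ⌊c2 / π⌋ with hr2def
  obtain ⟨hr1a, hr1b⟩ := floor_rep c1
  obtain ⟨hr2a, hr2b⟩ := floor_rep c2
  rw [← hr1def] at hr1a hr1b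
  rw [← hr2def] at hr2a hr2b
  refine ⟨6, ![0, 2 * π - δ, r1, r1 + π, r2, r2 + π], le_refl _, ?_, ?_⟩
  · intro j
    fin_cases j
    · exact ⟨le_refl (0 : ℝ), show (0 : ℝ) < 2 * π by linarith⟩
    · exact ⟨show (0 : ℝ) ≤ 2 * π - δ by linarith, show 2 * π - δ < 2 * π by linarith⟩
    · exact ⟨hr1a, show r1 < 2 * π by linarith⟩
    · exact ⟨show (0 : ℝ) ≤ r1 + π by linarith, show r1 + π < 2 * π by linarith⟩
    · exact ⟨hr2a, show r2 < 2 * π by linarith⟩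
    · exact ⟨show (0 : ℝ) ≤ r2 + π by linarith, show r2 + π < 2 * π by linarith⟩
  · intro z hz hfar
    obtain ⟨hz0, hz2⟩ := hz
    -- z ≥ δ
    have hzδ : δ ≤ z := by
      have h0 : δ ≤ |z - 0| := hfar 0
      rw [sub_zero, abs_of_nonneg hz0] at h0
      exact h0
    -- z ≤ 2π - 2δ
    have hz2δ : z ≤ 2 * π - 2 * δ := by
      have h : δ ≤ |z - (2 * π - δ)| := hfar 1
      rcases abs_cases (z - (2 * π - δ)) with ⟨he, _⟩ | ⟨he, _⟩
      · rw [he] at h; linarith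
      · rw [he] at h; linarith
    -- far from all translates of r1 and r2
    have hkey : ∀ (c r : ℝ) (m : ℤ), r = c - π * m → 0 ≤ r → r < π →
        δ ≤ |z - r| → δ ≤ |z - (r + π)| → ∀ k : ℤ, δ ≤ |z - c - k * π| := by
      intro c r m hrm hr0 hrπ hf0 hf1 k
      have heq : z - c - k * π = z - r - (k + m : ℤ) * π := by
        rw [hrm]; push_cast; ring
      rw [heq]
      set j : ℤ := k + m with hjdef
      clear_value j
      rcases le_or_gt j (-1) with hj | hj
      · have hj' : (j : ℝ) ≤ -1 := by exact_mod_cast hj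
        calc δ ≤ z - r - j * π := by nlinarith
          _ ≤ |z - r - j * π| := le_abs_self _
      rcases le_or_gt 2 j with hj2 | hj2
      · have hj' : (2 : ℝ) ≤ (j : ℝ) := by exact_mod_cast hj2
        calc δ ≤ -(z - r - j * π) := by nlinarith
          _ ≤ |z - r - j * π| := neg_le_abs _
      · interval_cases j
        · simpa using hf0
        · have h1 : z - r - ((1 : ℤ) : ℝ) * π = z - (r + π) := by push_cast; ring
          rw [h1]; exact hf1
    have hδπ : δ ≤ π / 2 := by linarith
    have hJ1 : 2 / π * δ ≤ |Real.sin (z - c1)| := by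
      apply jordan_far hδ hδπ
      intro k
      exact hkey c1 r1 ⌊c1 / π⌋ hr1def hr1a hr1b
        (hfar 2) (hfar 3) k
    have hJ2 : 2 / π * δ ≤ |Real.sin (z - c2)| := by
      apply jordan_far hδ hδπ
      intro k
      exact hkey c2 r2 ⌊c2 / π⌋ hr2def hr2a hr2b
        (hfar 4) (hfar 5) k
    -- product identity
    have hid : Real.sin (2 * z + α) - Real.sin β
        = -2 * Real.sin (z - c1) * Real.sin (z - c2) := by
      have h1 := Real.sin_sub_sin (2 * z + α) β
      have h2 : Real.sin (z - c2) = -Real.cos ((2 * z + α + β) / 2) := by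
        rw [show z - c2 = -(π / 2 - (2 * z + α + β) / 2) by rw [hc2def]; ring,
          Real.sin_neg, Real.sin_pi_div_two_sub]
      have h3 : (2 * z + α - β) / 2 = z - c1 := by rw [hc1def]; ring
      have h2' : Real.cos ((2 * z + α + β) / 2) = -Real.sin (z - c2) := by
        rw [h2]; ring
      rw [h3, h2'] at h1
      rw [h1]; ring
    -- the double angle identity
    have hdbl : Real.cos z * Real.sin (z + α) - lam
        = 1 / 2 * (Real.sin (2 * z + α) - μ) := by
      have h1 : Real.sin (2 * z + α)
          = Real.sin z * Real.cos (z + α) + Real.cos z * Real.sin (z + α) := by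
        rw [show 2 * z + α = z + (z + α) by ring, Real.sin_add]
      have h2 : Real.sin α
          = Real.sin (z + α) * Real.cos z - Real.cos (z + α) * Real.sin z := by
        rw [← Real.sin_sub]; ring_nf
      rw [hμdef]
      linarith
    have hclamp : |Real.sin (2 * z + α) - μ'| ≤ |Real.sin (2 * z + α) - μ| :=
      clamp_closer (Real.neg_one_le_sin _) (Real.sin_le_one _)
    have habs2 : |Real.sin (2 * z + α) - Real.sin β|
        = 2 * (|Real.sin (z - c1)| * |Real.sin (z - c2)|) := by
      have h2 : |(-2 : ℝ)| = 2 := by norm_num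
      rw [hid, abs_mul, abs_mul, h2]
      ring
    have hππ : π * π ≤ 16 := by
      have h16 := mul_le_mul hp4 hp4 hp.le (by norm_num : (0:ℝ) ≤ 4)
      linarith
    have hππ0 : (0 : ℝ) < π * π := mul_pos hp hp
    calc 1 / 4 * δ ^ 2 ≤ (2 / π * δ) * (2 / π * δ) := by
          rw [div_mul_eq_mul_div, div_mul_eq_mul_div, div_mul_div_comm,
            le_div_iff₀ hππ0]
          nlinarith [mul_le_mul_of_nonneg_left hππ (sq_nonneg δ)]
      _ ≤ |Real.sin (z - c1)| * |Real.sin (z - c2)| := by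
          apply mul_le_mul hJ1 hJ2 (by positivity) (abs_nonneg _)
      _ = 1 / 2 * |Real.sin (2 * z + α) - Real.sin β| := by rw [habs2]; ring
      _ ≤ 1 / 2 * |Real.sin (2 * z + α) - μ| := by rw [hβ]; linarith
      _ = |Real.cos z * Real.sin (z + α) - lam| := by
          rw [hdbl, abs_mul, abs_of_pos (by norm_num : (0:ℝ) < 1/2)]
end

section
/- Suppose a ≥ 0 satisfies the differential inequality (d/dt) x(t) ≤ -c x(t)(x(t)² - A)(x(t) + √A·B)/M⁴ + g'(t) for constants c, A, B, M > 0, with g nondecreasing, g(0) = 0, g bounded by G. Then x(t) ≤ max(x(0), √A) + G for all t ≥ 0. -/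
open Real

theorem stmt_13 (c A B M G : ℝ) (hc : 0 < c) (hA : 0 < A) (hB : 0 < B) (hM : 0 < M)
    (x g : ℝ → ℝ) (x' g' : ℝ → ℝ)
    (hx0 : ∀ t, 0 ≤ t → 0 ≤ x t)
    (hxd : ∀ t, 0 ≤ t → HasDerivAt x (x' t) t)
    (hgd : ∀ t, 0 ≤ t → HasDerivAt g (g' t) t)
    (hgmono : MonotoneOn g (Set.Ici 0))
    (hg0 : g 0 = 0) (hgG : ∀ t, 0 ≤ t → g t ≤ G)
    (hode : ∀ t, 0 ≤ t →
      x' t ≤ -c * x t * ((x t) ^ 2 - A) * (x t + Real.sqrt A * B) / M ^ 4 + g' t) :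
    ∀ t, 0 ≤ t → x t ≤ max (x 0) (Real.sqrt A) + G := by
  intro t ht
  set K : ℝ := max (x 0) (Real.sqrt A) with hK
  have hsA : 0 < Real.sqrt A := Real.sqrt_pos.mpr hA
  have hKA : Real.sqrt A ≤ K := le_max_right _ _
  -- Show x t - g t ≤ K + ε for every ε > 0
  have key : ∀ ε : ℝ, 0 < ε → x t - g t ≤ K + ε := by
    intro ε hε
    have hmain : ∀ ⦃s⦄, s ∈ Set.Icc (0:ℝ) t → x s - g s ≤ K + ε := by
      apply image_le_of_deriv_right_lt_deriv_boundary
        (f := fun s => x s - g s) (f' := fun s => x' s - g' s)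
        (B := fun _ => K + ε) (B' := fun _ => 0)
      · intro s hs
        exact (((hxd s hs.1).sub (hgd s hs.1)).continuousAt).continuousWithinAt
      · intro s hs
        exact (((hxd s hs.1).sub (hgd s hs.1)).hasDerivWithinAt)
      · have : x 0 ≤ K := le_max_left _ _
        simp only [hg0]
        linarith
      · intro s; exact hasDerivAt_const _ _
      · intro s hs heq
        have hs0 : 0 ≤ s := hs.1
        have hg0s : 0 ≤ g s := by
          have := hgmono (Set.self_mem_Ici) (Set.mem_Ici.mpr hs0) hs0
          simpa [hg0] using this
        have hxs : Real.sqrt A + ε ≤ x s := by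
          have : x s = K + ε + g s := by linarith [heq]
          nlinarith
        have hxpos : 0 < x s := by linarith
        have hx2 : A < (x s) ^ 2 := by
          have h1 : Real.sqrt A < x s := by linarith
          nlinarith [Real.sq_sqrt hA.le]
        have hode' := hode s hs0
        have hp : 0 < c * x s * ((x s) ^ 2 - A) * (x s + Real.sqrt A * B) :=
          mul_pos (mul_pos (mul_pos hc hxpos) (by linarith)) (by positivity)
        have hneg : -c * x s * ((x s) ^ 2 - A) * (x s + Real.sqrt A * B) / M ^ 4 < 0 := by
          apply div_neg_of_neg_of_pos
          · nlinarith
          · positivity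
        have : x' s < g' s := by linarith
        simpa using this
    have ht' : t ∈ Set.Icc (0:ℝ) t := ⟨ht, le_refl t⟩
    exact hmain ht'
  have h1 : x t - g t ≤ K := by
    by_contra h
    push_neg at h
    have := key ((x t - g t - K) / 2) (by linarith)
    linarith
  have hgt : g t ≤ G := hgG t ht
  linarith
end
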